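/- The infinite product ∏_{n=1}^{∞} (1 + z/n)^n · exp(−z + z²/(2n)) converges locally uniformly on ℂ, so that G(z+1) := (2π)^{z/2} exp(−[(1+γ)z² + z]/2) ∏_{n=1}^{∞} (1 + z/n)^n exp(−z + z²/(2n)) defines an entire function of z; moreover G(z+1) vanishes exactly at the points z = −n for positive integers n, and the zero at z = −n has multiplicity exactly n. -/

import Mathlib

open Complex Real Filter

/-- The infinite product defining the Barnes double Gamma function. -/
noncomputable def barnesProd (z : ℂ) : ℂ :=
  ∏' n : ℕ, (1 + z / (n + 1)) ^ (n + 1) * Complex.exp (-z + z ^ 2 / (2 * ((n : ℂ) + 1)))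

/-- The Barnes double Gamma function: `barnesG1 z = G(z+1)`. -/
noncomputable def barnesG1 (z : ℂ) : ℂ :=
  (2 * Real.pi : ℂ) ^ (z / 2) *
    Complex.exp (-(((1 + (Real.eulerMascheroniConstant : ℂ)) * z ^ 2 + z) / 2)) * barnesProd z

namespace BarnesAux

/-- The factor of the Barnes product. -/
noncomputable def bf (n : ℕ) (z : ℂ) : ℂ :=
  (1 + z / (n + 1)) ^ (n + 1) * Complex.exp (-z + z ^ 2 / (2 * ((n : ℂ) + 1)))

/-- Logarithm of the factor. -/
noncomputable def bg (n : ℕ) (z : ℂ) : ℂ :=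
  ((n : ℂ) + 1) * Complex.log (1 + z / (n + 1)) + (-z + z ^ 2 / (2 * ((n : ℂ) + 1)))

lemma bf_eq_exp_bg {n : ℕ} {z : ℂ} (h : 1 + z / ((n : ℂ) + 1) ≠ 0) :
    bf n z = Complex.exp (bg n z) := by
  have hc : ((n + 1 : ℕ) : ℂ) = (n : ℂ) + 1 := by push_cast; ring
  rw [bg, Complex.exp_add, bf]
  congr 1
  rw [show ((n:ℂ)+1) * Complex.log (1 + z/((n:ℂ)+1))
      = ((n+1:ℕ):ℂ) * Complex.log (1 + z/((n:ℂ)+1)) by rw [hc],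
    Complex.exp_nat_mul, Complex.exp_log h]

lemma base_ne_zero {n : ℕ} {r : ℝ} {w : ℂ} (hz : ‖w‖ ≤ r) (hn : 2 * r ≤ (n : ℝ) + 1) :
    1 + w / ((n : ℂ) + 1) ≠ 0 := by
  intro h
  have hd : ((n : ℂ) + 1) ≠ 0 := Nat.cast_add_one_ne_zero n
  have : w = -((n : ℂ) + 1) := by
    field_simp at h
    linear_combination h
  rw [this] at hz
  have h1 : ‖-((n : ℂ) + 1)‖ = (n : ℝ) + 1 := by
    rw [norm_neg]
    have : ((n : ℂ) + 1) = ((n + 1 : ℕ) : ℂ) := by push_cast; ring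
    rw [this, Complex.norm_natCast]
    push_cast; ring
  rw [h1] at hz
  nlinarith [hz, hn]

lemma norm_div_le {n : ℕ} {r : ℝ} {w : ℂ} (hz : ‖w‖ ≤ r) (hn : 2 * r ≤ (n : ℝ) + 1) :
    ‖w / ((n : ℂ) + 1)‖ ≤ 1 / 2 := by
  have hd : ‖((n : ℂ) + 1)‖ = (n : ℝ) + 1 := by
    have : ((n : ℂ) + 1) = ((n + 1 : ℕ) : ℂ) := by push_cast; ring
    rw [this, Complex.norm_natCast]; push_cast; ring
  rw [norm_div, hd, div_le_div_iff₀ (by positivity) (by norm_num)]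
  nlinarith [norm_nonneg w]

lemma bg_bound {n : ℕ} {r : ℝ} {w : ℂ} (hz : ‖w‖ ≤ r) (hn : 2 * r ≤ (n : ℝ) + 1) :
    ‖bg n w‖ ≤ r ^ 3 / ((n : ℝ) + 1) ^ 2 := by
  have hr0 : 0 ≤ r := le_trans (norm_nonneg w) hz
  set u : ℂ := w / ((n : ℂ) + 1) with hu
  have hd : ((n : ℂ) + 1) ≠ 0 := Nat.cast_add_one_ne_zero n
  have hun : ‖u‖ ≤ 1 / 2 := norm_div_le hz hn
  have hu1 : ‖u‖ < 1 := lt_of_le_of_lt hun (by norm_num)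
  have key : bg n w = ((n : ℂ) + 1) * (Complex.log (1 + u) - Complex.logTaylor 3 u) := by
    have hT : Complex.logTaylor 3 u = u - u ^ 2 / 2 := by
      simp [Complex.logTaylor_succ, Complex.logTaylor_zero]
      ring
    rw [hT, bg, hu]
    field_simp
    ring
  rw [key, norm_mul]
  have hd2 : ‖((n : ℂ) + 1)‖ = (n : ℝ) + 1 := by
    have : ((n : ℂ) + 1) = ((n + 1 : ℕ) : ℂ) := by push_cast; ring
    rw [this, Complex.norm_natCast]; push_cast; ring
  rw [hd2]
  have hb := Complex.norm_log_sub_logTaylor_le 2 hu1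
  have h3 : ‖Complex.log (1 + u) - Complex.logTaylor 3 u‖ ≤ ‖u‖ ^ 3 * 2 / 3 := by
    have hinv : (1 - ‖u‖)⁻¹ ≤ 2 := by
      rw [inv_le_comm₀ (by linarith) (by norm_num)]
      linarith
    norm_num at hb
    calc ‖Complex.log (1 + u) - Complex.logTaylor 3 u‖
        ≤ ‖u‖ ^ 3 * (1 - ‖u‖)⁻¹ / 3 := hb
      _ ≤ ‖u‖ ^ 3 * 2 / 3 := by gcongr
  have hn1 : (0:ℝ) < (n : ℝ) + 1 := by positivity
  have huw : ‖u‖ = ‖w‖ / ((n:ℝ) + 1) := by rw [hu, norm_div, hd2]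
  calc ((n:ℝ) + 1) * ‖Complex.log (1 + u) - Complex.logTaylor 3 u‖
      ≤ ((n:ℝ) + 1) * (‖u‖ ^ 3 * 2 / 3) := by gcongr
    _ ≤ ((n:ℝ) + 1) * ((r / ((n:ℝ)+1)) ^ 3 * 2 / 3) := by
        gcongr
        rw [huw]
        gcongr
    _ ≤ r ^ 3 / ((n : ℝ) + 1) ^ 2 := by
        have e : ((n:ℝ)+1) * ((r/((n:ℝ)+1))^3 * 2/3) = (2/3) * (r^3/((n:ℝ)+1)^2) := by
          field_simp
        rw [e]
        have h0 : (0:ℝ) ≤ r^3/((n:ℝ)+1)^2 := by positivity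
        linarith


lemma tendstoUniformlyOn_cexp_comp {F : ℕ → ℂ → ℂ} {h : ℂ → ℂ} {s : Set ℂ} {C : ℝ}
    (hb : ∀ z ∈ s, ‖h z‖ ≤ C)
    (hF : TendstoUniformlyOn F h atTop s) :
    TendstoUniformlyOn (fun n z => Complex.exp (F n z)) (fun z => Complex.exp (h z)) atTop s := by
  rw [Metric.tendstoUniformlyOn_iff] at hF ⊢
  intro ε hε
  have hC : 0 < 2 * Real.exp C + 1 := by positivity
  have hδ : 0 < min 1 (ε / (2 * Real.exp C + 1)) := by positivity
  filter_upwards [hF _ hδ] with n hn z hz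
  have hd := hn z hz
  rw [Complex.dist_eq] at hd ⊢
  have hkey : Complex.exp (h z) - Complex.exp (F n z)
      = Complex.exp (h z) * (1 - Complex.exp (F n z - h z)) := by
    rw [mul_sub, mul_one, ← Complex.exp_add]
    ring_nf
  rw [hkey, norm_mul]
  have h1 : ‖h z - F n z‖ < min 1 (ε / (2 * Real.exp C + 1)) := hd
  have habs : ‖F n z - h z‖ = ‖h z - F n z‖ := by
    rw [← norm_neg, neg_sub]
  have h2 : ‖1 - Complex.exp (F n z - h z)‖
      ≤ 2 * ‖F n z - h z‖ := by
    rw [← norm_neg, neg_sub]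
    exact Complex.norm_exp_sub_one_le
      (by rw [habs]; exact le_trans h1.le (min_le_left _ _))
  have h3 : ‖Complex.exp (h z)‖ ≤ Real.exp C := by
    rw [Complex.norm_exp]
    exact Real.exp_le_exp.mpr (le_trans (Complex.re_le_norm _) (hb z hz))
  have h4 : ‖F n z - h z‖ < ε / (2 * Real.exp C + 1) := by
    rw [habs]; exact lt_of_lt_of_le h1 (min_le_right _ _)
  calc ‖Complex.exp (h z)‖ * ‖1 - Complex.exp (F n z - h z)‖
      ≤ Real.exp C * (2 * ‖F n z - h z‖) := by
        apply mul_le_mul h3 h2 (norm_nonneg _) (Real.exp_nonneg _)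
    _ < Real.exp C * (2 * (ε / (2 * Real.exp C + 1))) := by
        have he : 0 < Real.exp C := Real.exp_pos C
        apply mul_lt_mul_of_pos_left _ he
        linarith
    _ ≤ ε := by
        have hq : (2 * Real.exp C + 1) * (ε / (2 * Real.exp C + 1)) = ε := by
          field_simp
        nlinarith [Real.exp_pos C, div_nonneg hε.le hC.le]




/-! Per-radius structure -/

noncomputable def NN (r : ℝ) : ℕ := ⌈2 * r⌉₊

lemma two_r_le {r : ℝ} (m : ℕ) : 2 * r ≤ ((m + NN r : ℕ) : ℝ) + 1 := by
  have h := Nat.le_ceil (2 * r)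
  have h2 : (NN r : ℝ) ≤ ((m + NN r : ℕ) : ℝ) := by
    push_cast; linarith [Nat.cast_nonneg (α := ℝ) m]
  calc 2 * r ≤ (NN r : ℝ) := h
    _ ≤ ((m + NN r : ℕ) : ℝ) + 1 := by linarith

lemma summable_u (r : ℝ) : Summable (fun m : ℕ => r ^ 3 / ((m : ℝ) + 1) ^ 2) := by
  have h0 : Summable (fun n : ℕ => 1 / (n : ℝ) ^ 2) :=
    Real.summable_one_div_nat_pow.mpr one_lt_two
  have h1 : Summable (fun n : ℕ => 1 / ((n : ℝ) + 1) ^ 2) := by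
    have := (summable_nat_add_iff 1).mpr h0
    simpa using this
  have := h1.mul_left (r ^ 3)
  simpa [div_eq_mul_inv, mul_comm, mul_assoc] using this

noncomputable def TT (r : ℝ) (z : ℂ) : ℂ := ∑' m : ℕ, bg (m + NN r) z

lemma bg_shift_bound {r : ℝ} (m : ℕ) {z : ℂ} (hz : z ∈ Metric.closedBall (0 : ℂ) r) :
    ‖bg (m + NN r) z‖ ≤ r ^ 3 / ((m : ℝ) + 1) ^ 2 := by
  rw [Metric.mem_closedBall, dist_zero_right] at hz
  have hr0 : 0 ≤ r := le_trans (norm_nonneg z) hz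
  refine le_trans (bg_bound hz (two_r_le m)) ?_
  gcongr
  exact Nat.le_add_right m _

lemma summable_bg {r : ℝ} {z : ℂ} (hz : z ∈ Metric.closedBall (0 : ℂ) r) :
    Summable (fun m : ℕ => bg (m + NN r) z) :=
  Summable.of_norm_bounded (summable_u r) (fun m => bg_shift_bound m hz)

lemma sum_tendsto (r : ℝ) :
    TendstoUniformlyOn (fun N z => ∑ m ∈ Finset.range N, bg (m + NN r) z) (TT r) atTop
      (Metric.closedBall 0 r) :=
  tendstoUniformlyOn_tsum_nat (summable_u r) (fun m z hz => bg_shift_bound m hz)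

lemma TT_bound {r : ℝ} {z : ℂ} (hz : z ∈ Metric.closedBall (0 : ℂ) r) :
    ‖TT r z‖ ≤ ∑' m : ℕ, r ^ 3 / ((m : ℝ) + 1) ^ 2 :=
  tsum_of_norm_bounded (summable_u r).hasSum (fun m => bg_shift_bound m hz)

lemma base_shift_ne {r : ℝ} (m : ℕ) {z : ℂ} (hz : z ∈ Metric.closedBall (0 : ℂ) r) :
    1 + z / (((m + NN r : ℕ) : ℂ) + 1) ≠ 0 := by
  rw [Metric.mem_closedBall, dist_zero_right] at hz
  exact base_ne_zero hz (two_r_le m)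

lemma bf_shift_eq {r : ℝ} (m : ℕ) {z : ℂ} (hz : z ∈ Metric.closedBall (0 : ℂ) r) :
    bf (m + NN r) z = Complex.exp (bg (m + NN r) z) :=
  bf_eq_exp_bg (base_shift_ne m hz)

/-- Tail partial products converge uniformly to `exp (TT r)`. -/
lemma tail_prod_tendsto (r : ℝ) :
    TendstoUniformlyOn (fun N z => ∏ m ∈ Finset.range N, bf (m + NN r) z)
      (fun z => Complex.exp (TT r z)) atTop (Metric.closedBall 0 r) := by
  have hb : ∀ z ∈ Metric.closedBall (0 : ℂ) r, ‖TT r z‖ ≤ ∑' m : ℕ, r ^ 3 / ((m : ℝ) + 1) ^ 2 :=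
    fun z hz => TT_bound hz
  have := tendstoUniformlyOn_cexp_comp hb (sum_tendsto r)
  refine this.congr ?_
  filter_upwards with N z hz
  show Complex.exp (∑ m ∈ Finset.range N, bg (m + NN r) z)
      = ∏ m ∈ Finset.range N, bf (m + NN r) z
  rw [Complex.exp_sum]
  exact Finset.prod_congr rfl (fun m _ => (bf_shift_eq m hz).symm)

lemma hasProd_tail {r : ℝ} {z : ℂ} (hz : z ∈ Metric.closedBall (0 : ℂ) r) :
    HasProd (fun m : ℕ => bf (m + NN r) z) (Complex.exp (TT r z)) := by
  have h := (summable_bg hz).hasSum.cexp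
  have he : (Complex.exp ∘ fun m => bg (m + NN r) z) = fun m : ℕ => bf (m + NN r) z := by
    funext m; exact (bf_shift_eq m hz).symm
  rw [TT, ← he]
  exact h

lemma hasProd_bf {r : ℝ} {z : ℂ} (hz : z ∈ Metric.closedBall (0 : ℂ) r) :
    HasProd (fun n : ℕ => bf n z)
      ((∏ n ∈ Finset.range (NN r), bf n z) * Complex.exp (TT r z)) :=
  HasProd.prod_range_mul (hasProd_tail hz)

lemma key_eq {r : ℝ} {z : ℂ} (hz : z ∈ Metric.closedBall (0 : ℂ) r) :
    (∏' n : ℕ, bf n z) = (∏ n ∈ Finset.range (NN r), bf n z) * Complex.exp (TT r z) :=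
  (hasProd_bf hz).tprod_eq


lemma bf_differentiable (n : ℕ) : Differentiable ℂ (bf n) := by
  unfold bf
  fun_prop

lemma prod_differentiable (s : Finset ℕ) :
    Differentiable ℂ (fun z => ∏ n ∈ s, bf n z) := by
  classical
  induction s using Finset.induction_on with
  | empty => simpa using differentiable_const (1 : ℂ)
  | @insert a s ha ih =>
    have : (fun z => ∏ n ∈ insert a s, bf n z)
        = fun z => bf a z * ∏ n ∈ s, bf n z := by
      funext z; rw [Finset.prod_insert ha]
    rw [this]
    exact (bf_differentiable a).mul ih

lemma partial_differentiable (N : ℕ) :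
    Differentiable ℂ (fun z => ∏ n ∈ Finset.range N, bf n z) :=
  prod_differentiable (Finset.range N)

lemma barnesProd_eq (z : ℂ) : barnesProd z = ∏' n : ℕ, bf n z := rfl

lemma full_tendsto (r : ℝ) :
    TendstoUniformlyOn (fun N z => ∏ n ∈ Finset.range N, bf n z) barnesProd
      atTop (Metric.closedBall 0 r) := by
  rw [Metric.tendstoUniformlyOn_iff]
  intro ε hε
  obtain ⟨C, hC⟩ := (isCompact_closedBall (0 : ℂ) r).exists_bound_of_continuousOn
    (Continuous.continuousOn (partial_differentiable (NN r)).continuous)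
  set C' := max C 0 with hC'
  have hC'0 : 0 ≤ C' := le_max_right _ _
  have hQ := tail_prod_tendsto r
  rw [Metric.tendstoUniformlyOn_iff] at hQ
  have hq := hQ (ε / (C' + 1)) (by positivity)
  rw [eventually_atTop] at hq
  obtain ⟨k₀, hk₀⟩ := hq
  rw [eventually_atTop]
  refine ⟨NN r + k₀, fun N hN z hz => ?_⟩
  have hsplit : (∏ n ∈ Finset.range N, bf n z)
      = (∏ n ∈ Finset.range (NN r), bf n z)
        * ∏ m ∈ Finset.range (N - NN r), bf (NN r + m) z := by
    have hNeq : NN r + (N - NN r) = N := by omega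
    rw [← Finset.prod_range_add, hNeq]
  have hkey := key_eq hz
  have hdist := hk₀ (N - NN r) (by omega) z hz
  rw [Complex.dist_eq] at hdist ⊢
  have hre : (∏ m ∈ Finset.range (N - NN r), bf (NN r + m) z)
      = ∏ m ∈ Finset.range (N - NN r), bf (m + NN r) z :=
    Finset.prod_congr rfl (fun m _ => by rw [add_comm])
  rw [barnesProd_eq, hkey, hsplit, hre]
  have heq : (∏ n ∈ Finset.range (NN r), bf n z) * Complex.exp (TT r z)
      - (∏ n ∈ Finset.range (NN r), bf n z)
        * ∏ m ∈ Finset.range (N - NN r), bf (m + NN r) z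
      = (∏ n ∈ Finset.range (NN r), bf n z)
        * (Complex.exp (TT r z) - ∏ m ∈ Finset.range (N - NN r), bf (m + NN r) z) := by
    ring
  rw [heq, norm_mul]
  have h1 : ‖∏ n ∈ Finset.range (NN r), bf n z‖ ≤ C' :=
    le_trans (hC z hz) (le_max_left _ _)
  calc ‖∏ n ∈ Finset.range (NN r), bf n z‖
        * ‖Complex.exp (TT r z) - ∏ m ∈ Finset.range (N - NN r), bf (m + NN r) z‖
      ≤ C' * (ε / (C' + 1)) := by
        apply mul_le_mul h1 hdist.le (norm_nonneg _) hC'0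
    _ < ε := by
        rw [div_eq_mul_inv]
        have h2 : C' < C' + 1 := by linarith
        have h3 : C' * (ε * (C' + 1)⁻¹) < (C' + 1) * (ε * (C' + 1)⁻¹) := by
          apply mul_lt_mul_of_pos_right h2 (by positivity)
        have h4 : (C' + 1) * (ε * (C' + 1)⁻¹) = ε := by field_simp
        linarith

lemma locally_uniform :
    TendstoLocallyUniformly (fun N z => ∏ n ∈ Finset.range N, bf n z) barnesProd atTop := by
  rw [tendstoLocallyUniformly_iff_forall_isCompact]
  intro K hK
  obtain ⟨r, hr⟩ := hK.isBounded.subset_closedBall 0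
  exact (full_tendsto r).mono hr

lemma barnesProd_differentiable : Differentiable ℂ barnesProd := by
  have := locally_uniform
  rw [← tendstoLocallyUniformlyOn_univ] at this
  rw [← differentiableOn_univ]
  exact this.differentiableOn
    (Eventually.of_forall fun N => (partial_differentiable N).differentiableOn) isOpen_univ

lemma two_pi_ne : (2 * Real.pi : ℂ) ≠ 0 := by
  simp only [ne_eq, mul_eq_zero, not_or]
  constructor
  · norm_num
  · exact_mod_cast Real.pi_ne_zero

lemma cpow_ne_zero (z : ℂ) : (2 * Real.pi : ℂ) ^ (z / 2) ≠ 0 := by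
  rw [Complex.cpow_def_of_ne_zero two_pi_ne]
  exact Complex.exp_ne_zero _

lemma cpow_differentiable : Differentiable ℂ (fun z : ℂ => (2 * Real.pi : ℂ) ^ (z / 2)) :=
  fun z => (differentiableAt_id.div_const 2).const_cpow (Or.inl two_pi_ne)

lemma barnesG1_differentiable : Differentiable ℂ barnesG1 := by
  unfold barnesG1
  apply Differentiable.mul _ barnesProd_differentiable
  apply cpow_differentiable.mul
  apply Differentiable.cexp
  fun_prop

lemma bf_eq_zero_iff {n : ℕ} {z : ℂ} : bf n z = 0 ↔ z = -((n : ℂ) + 1) := by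
  have hd : ((n : ℂ) + 1) ≠ 0 := Nat.cast_add_one_ne_zero n
  rw [bf, mul_eq_zero]
  constructor
  · rintro (h | h)
    · have h2 : 1 + z / ((n : ℂ) + 1) = 0 := pow_eq_zero_iff (Nat.succ_ne_zero n) |>.mp h
      field_simp at h2
      linear_combination h2
    · exact absurd h (Complex.exp_ne_zero _)
  · intro h
    left
    rw [h]
    have : 1 + -((n : ℂ) + 1) / ((n : ℂ) + 1) = 0 := by
      field_simp
      ring
    rw [this, zero_pow (Nat.succ_ne_zero n)]

lemma barnesProd_eq_zero_iff (z : ℂ) :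
    barnesProd z = 0 ↔ ∃ n : ℕ, 0 < n ∧ z = -(n : ℂ) := by
  have hz : z ∈ Metric.closedBall (0 : ℂ) ‖z‖ := by
    simp [Metric.mem_closedBall]
  rw [barnesProd_eq, key_eq hz, mul_eq_zero]
  simp only [Complex.exp_ne_zero, or_false]
  rw [Finset.prod_eq_zero_iff]
  constructor
  · rintro ⟨n, -, h⟩
    refine ⟨n + 1, Nat.succ_pos n, ?_⟩
    rw [bf_eq_zero_iff.mp h]
    push_cast
    ring
  · rintro ⟨m, hm, rfl⟩
    have hnorm : ‖(-(m : ℂ))‖ = (m : ℝ) := by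
      rw [norm_neg, Complex.norm_natCast]
    have hNN : NN ‖(-(m : ℂ))‖ = 2 * m := by
      rw [NN, hnorm, show 2 * (m : ℝ) = ((2 * m : ℕ) : ℝ) by push_cast; ring,
        Nat.ceil_natCast]
    refine ⟨m - 1, ?_, ?_⟩
    · rw [hNN, Finset.mem_range]
      omega
    · rw [bf_eq_zero_iff]
      rw [Nat.cast_sub hm]
      push_cast
      ring

lemma barnesG1_eq_zero_iff (z : ℂ) :
    barnesG1 z = 0 ↔ ∃ n : ℕ, 0 < n ∧ z = -(n : ℂ) := by
  rw [barnesG1, mul_eq_zero, mul_eq_zero]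
  simp only [cpow_ne_zero z, Complex.exp_ne_zero, false_or, or_false]
  exact barnesProd_eq_zero_iff z


lemma bg_differentiableAt {n : ℕ} {r : ℝ} {z : ℂ} (hz : ‖z‖ ≤ r) (hn : 2 * r ≤ (n : ℝ) + 1) :
    DifferentiableAt ℂ (bg n) z := by
  have hmem : 1 + z / ((n : ℂ) + 1) ∈ Complex.slitPlane :=
    Complex.mem_slitPlane_of_norm_lt_one (lt_of_le_of_lt (norm_div_le hz hn) (by norm_num))
  unfold bg
  apply DifferentiableAt.add
  · apply DifferentiableAt.const_mul
    exact DifferentiableAt.clog (f := fun y : ℂ => 1 + y / ((n : ℂ) + 1)) (by fun_prop) hmem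
  · fun_prop

lemma TT_differentiableOn (r : ℝ) : DifferentiableOn ℂ (TT r) (Metric.ball 0 r) := by
  apply TendstoLocallyUniformlyOn.differentiableOn
    (((sum_tendsto r).tendstoLocallyUniformlyOn).mono Metric.ball_subset_closedBall)
    ?_ Metric.isOpen_ball
  filter_upwards with N
  intro z hz
  apply DifferentiableAt.differentiableWithinAt
  apply DifferentiableAt.fun_sum
  intro m _
  apply bg_differentiableAt (r := r) ?_ (two_r_le m)
  rw [Metric.mem_ball, dist_zero_right] at hz
  exact hz.le

lemma barnesG1_factor (m : ℕ) (hm : 0 < m) :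
    ∃ g : ℂ → ℂ, AnalyticAt ℂ g (-(m : ℂ)) ∧ g (-(m : ℂ)) ≠ 0 ∧
      ∀ᶠ z in nhds (-(m : ℂ)), barnesG1 z = (z + m) ^ m * g z := by
  set r : ℝ := (m : ℝ) + 1 with hr
  have hm0 : (m : ℂ) ≠ 0 := Nat.cast_ne_zero.mpr hm.ne'
  have hmem : -(m : ℂ) ∈ Metric.ball (0 : ℂ) r := by
    rw [Metric.mem_ball, dist_zero_right, norm_neg, Complex.norm_natCast, hr]
    linarith
  have hball : Metric.ball (0 : ℂ) r ∈ nhds (-(m : ℂ)) := Metric.isOpen_ball.mem_nhds hmem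
  have hmlt : m - 1 ∈ Finset.range (NN r) := by
    rw [Finset.mem_range]
    have h1 : (2 * r : ℝ) ≤ (NN r : ℝ) := Nat.le_ceil _
    have h2 : (m : ℝ) < (NN r : ℝ) := by
      rw [hr] at h1
      linarith [Nat.cast_nonneg (α := ℝ) m]
    have h3 : m < NN r := Nat.cast_lt.mp h2
    omega
  set E : ℂ → ℂ := fun z => Complex.exp (-z + z ^ 2 / (2 * (m : ℂ))) / (m : ℂ) ^ m with hE
  refine ⟨fun z => (2 * Real.pi : ℂ) ^ (z / 2) *
      Complex.exp (-(((1 + (Real.eulerMascheroniConstant : ℂ)) * z ^ 2 + z) / 2)) *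
      (E z * ∏ n ∈ (Finset.range (NN r)).erase (m - 1), bf n z) *
      Complex.exp (TT r z), ?_, ?_, ?_⟩
  · apply DifferentiableOn.analyticAt _ hball
    apply DifferentiableOn.mul _ (TT_differentiableOn r).cexp
    apply Differentiable.differentiableOn
    apply Differentiable.mul
    · apply cpow_differentiable.mul
      apply Differentiable.cexp
      fun_prop
    · apply Differentiable.mul _ (prod_differentiable _)
      rw [hE]
      apply Differentiable.div_const
      apply Differentiable.cexp
      fun_prop
  · apply mul_ne_zero
    apply mul_ne_zero
    · exact mul_ne_zero (cpow_ne_zero _) (Complex.exp_ne_zero _)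
    · apply mul_ne_zero
      · exact div_ne_zero (Complex.exp_ne_zero _) (pow_ne_zero _ hm0)
      · rw [Finset.prod_ne_zero_iff]
        intro n hn
        intro hcontra
        have h4 := bf_eq_zero_iff.mp hcontra
        have h5 : (m : ℂ) = (n : ℂ) + 1 := by
          have := neg_injective h4
          exact this
        have h6 : m = n + 1 := by exact_mod_cast h5
        have h7 : n ≠ m - 1 := (Finset.mem_erase.mp hn).1
        omega
    · exact Complex.exp_ne_zero _
  · filter_upwards [hball] with z hz
    have hzc : z ∈ Metric.closedBall (0 : ℂ) r := Metric.ball_subset_closedBall hz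
    have hk := key_eq hzc
    have hsplit : (∏ n ∈ Finset.range (NN r), bf n z)
        = bf (m - 1) z * ∏ n ∈ (Finset.range (NN r)).erase (m - 1), bf n z :=
      (Finset.mul_prod_erase _ _ hmlt).symm
    have h1 : (((m - 1 : ℕ) : ℂ) + 1) = (m : ℂ) := by
      rw [Nat.cast_sub hm]
      push_cast
      ring
    have hbf : bf (m - 1) z = (z + (m : ℂ)) ^ m * E z := by
      rw [bf, h1, Nat.sub_add_cancel hm]
      have h3 : (1 : ℂ) + z / m = (z + m) / m := by
        field_simp
        ring
      rw [h3, div_pow, hE]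
      ring
    have hG : barnesG1 z = (2 * Real.pi : ℂ) ^ (z / 2) *
        Complex.exp (-(((1 + (Real.eulerMascheroniConstant : ℂ)) * z ^ 2 + z) / 2)) *
        barnesProd z := rfl
    rw [hG, barnesProd_eq, hk, hsplit, hbf]
    ring

end BarnesAux

theorem barnesG_entire_zeros :
    TendstoLocallyUniformly
      (fun N : ℕ => fun z : ℂ =>
        ∏ n ∈ Finset.range N,
          (1 + z / (n + 1)) ^ (n + 1) * Complex.exp (-z + z ^ 2 / (2 * ((n : ℂ) + 1))))
      barnesProd atTop ∧
    Differentiable ℂ barnesG1 ∧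
    (∀ z : ℂ, barnesG1 z = 0 ↔ ∃ n : ℕ, 0 < n ∧ z = -(n : ℂ)) ∧
    (∀ n : ℕ, 0 < n → ∃ g : ℂ → ℂ, AnalyticAt ℂ g (-(n : ℂ)) ∧ g (-(n : ℂ)) ≠ 0 ∧
      ∀ᶠ z in nhds (-(n : ℂ)), barnesG1 z = (z + n) ^ n * g z) := by
  exact ⟨BarnesAux.locally_uniform, BarnesAux.barnesG1_differentiable,
    BarnesAux.barnesG1_eq_zero_iff, fun n hn => BarnesAux.barnesG1_factor n hn⟩
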